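/- Let λ > 0, X ∈ ℝ^{m×n}, W₁ ∈ ℝ^{k×m}, W₂ ∈ ℝ^{m×k}. If (W₁, W₂) is a critical point of the sum loss L_σ, i.e. W₂ᵀ(W₂W₁ − I_m)XXᵀ + λW₁ = 0 and (W₂W₁ − I_m)XXᵀW₁ᵀ + λW₂ = 0, then the matrix C = (I_m − W₂W₁)XXᵀ is symmetric and positive semidefinite. -/

import Mathlib

open Matrix

private lemma posSemidef_smul' {m : ℕ} {A : Matrix (Fin m) (Fin m) ℝ}
    (hA : A.PosSemidef) {c : ℝ} (hc : 0 ≤ c) : (c • A).PosSemidef := by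
  refine ⟨?_, fun x => ?_⟩
  · unfold Matrix.IsHermitian
    rw [conjTranspose_smul, hA.1]
    simp
  · exact (hA.smul hc).2 x

/-- At any critical point of the sum loss `L_σ`, the matrix
`C = (I - W₂W₁)XXᵀ` is symmetric positive semidefinite. -/
theorem C_posSemidef {m n k : ℕ} (lam : ℝ) (hlam : 0 < lam)
    (X : Matrix (Fin m) (Fin n) ℝ)
    (W1 : Matrix (Fin k) (Fin m) ℝ) (W2 : Matrix (Fin m) (Fin k) ℝ)
    (h1 : W2ᵀ * (W2 * W1 - 1) * (X * Xᵀ) + lam • W1 = 0)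
    (h2 : (W2 * W1 - 1) * (X * Xᵀ) * W1ᵀ + lam • W2 = 0) :
    ((1 - W2 * W1) * (X * Xᵀ)).PosSemidef := by
  set S : Matrix (Fin m) (Fin m) ℝ := X * Xᵀ with hS
  have hSsym : Sᵀ = S := by rw [hS, transpose_mul, transpose_transpose]
  set D : Matrix (Fin m) (Fin m) ℝ := W1ᵀ * W1 with hD
  have hDsym : Dᵀ = D := by rw [hD, transpose_mul, transpose_transpose]
  set C : Matrix (Fin m) (Fin m) ℝ := (1 - W2 * W1) * S with hC
  set T : Matrix (Fin m) (Fin m) ℝ := lam • 1 + D * S with hT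
  -- from h2 : C * W1ᵀ = lam • W2
  have hW2 : C * W1ᵀ = lam • W2 := by
    have h2' : (W2 * W1 - 1) * S * W1ᵀ = -(lam • W2) := eq_neg_of_add_eq_zero_left h2
    have e : C * W1ᵀ = -((W2 * W1 - 1) * S * W1ᵀ) := by
      rw [hC]
      simp only [Matrix.sub_mul, Matrix.one_mul, neg_sub]
    rw [e, h2', neg_neg]
  -- C * T = lam • S
  have hCDS : C * (D * S) = lam • (W2 * (W1 * S)) := by
    have e1 : C * (D * S) = (C * W1ᵀ) * (W1 * S) := by
      rw [hD]; simp only [Matrix.mul_assoc]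
    rw [e1, hW2, Matrix.smul_mul]
  have hCT : C * T = lam • S := by
    rw [hT, Matrix.mul_add, mul_smul_comm, Matrix.mul_one, hCDS, ← smul_add, hC]
    congr 1
    rw [Matrix.sub_mul, Matrix.one_mul, Matrix.mul_assoc]
    exact sub_add_cancel S (W2 * (W1 * S))
  have hTt : Tᵀ = lam • 1 + S * D := by
    rw [hT, transpose_add, transpose_smul, transpose_one, transpose_mul, hSsym, hDsym]
  set N : Matrix (Fin m) (Fin m) ℝ := lam • S + S * D * S with hN
  have hTCT : Tᵀ * (C * T) = lam • N := by
    rw [hCT, mul_smul_comm, hTt, hN]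
    congr 1
    rw [Matrix.add_mul, Matrix.smul_mul, Matrix.one_mul]
  -- T is invertible
  have hdd : ∀ {p : ℕ} (w : Fin p → ℝ), 0 ≤ w ⬝ᵥ w := fun w =>
    Finset.sum_nonneg fun i _ => mul_self_nonneg _
  have key : ∀ {p q : ℕ} (A : Matrix (Fin p) (Fin q) ℝ) (x : Fin q → ℝ) (y : Fin p → ℝ),
      (A *ᵥ x) ⬝ᵥ y = x ⬝ᵥ (Aᵀ *ᵥ y) := by
    intro p q A x y
    rw [dotProduct_mulVec, vecMul_transpose]
  have hker : ∀ v : Fin m → ℝ, T *ᵥ v = 0 → v = 0 := by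
    intro v hv
    have h0 : (S *ᵥ v) ⬝ᵥ (T *ᵥ v) = 0 := by rw [hv, dotProduct_zero]
    have hSv : S *ᵥ v = X *ᵥ (Xᵀ *ᵥ v) := by rw [hS, ← mulVec_mulVec]
    have hTv : T *ᵥ v = lam • v + D *ᵥ (S *ᵥ v) := by
      rw [hT, add_mulVec, smul_mulVec, one_mulVec, ← mulVec_mulVec]
    have t1 : (S *ᵥ v) ⬝ᵥ v = (Xᵀ *ᵥ v) ⬝ᵥ (Xᵀ *ᵥ v) := by
      rw [hSv]; exact key X (Xᵀ *ᵥ v) v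
    have t2 : (S *ᵥ v) ⬝ᵥ (D *ᵥ (S *ᵥ v)) =
        (W1 *ᵥ (S *ᵥ v)) ⬝ᵥ (W1 *ᵥ (S *ᵥ v)) := by
      have e : W1ᵀ *ᵥ (W1 *ᵥ (S *ᵥ v)) = D *ᵥ (S *ᵥ v) := by
        rw [mulVec_mulVec, hD]
      rw [← e]
      exact (key W1 (S *ᵥ v) (W1 *ᵥ (S *ᵥ v))).symm
    have hexp : (S *ᵥ v) ⬝ᵥ (T *ᵥ v)
        = lam * ((Xᵀ *ᵥ v) ⬝ᵥ (Xᵀ *ᵥ v)) + (W1 *ᵥ (S *ᵥ v)) ⬝ᵥ (W1 *ᵥ (S *ᵥ v)) := by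
      rw [hTv, dotProduct_add, dotProduct_smul, smul_eq_mul, t1, t2]
    have ha : 0 ≤ (Xᵀ *ᵥ v) ⬝ᵥ (Xᵀ *ᵥ v) := hdd _
    have hb : 0 ≤ (W1 *ᵥ (S *ᵥ v)) ⬝ᵥ (W1 *ᵥ (S *ᵥ v)) := hdd _
    have hXtv : Xᵀ *ᵥ v = 0 := by
      rw [← dotProduct_self_eq_zero (v := Xᵀ *ᵥ v)]
      nlinarith [hexp, h0]
    have hSv0 : S *ᵥ v = 0 := by rw [hSv, hXtv, mulVec_zero]
    have hlv : lam • v = 0 := by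
      have hv' := hv
      rw [hTv, hSv0, mulVec_zero, add_zero] at hv'
      exact hv'
    have := congrArg (fun w => lam⁻¹ • w) hlv
    simpa [smul_smul, inv_mul_cancel₀ hlam.ne'] using this
  have hinj : Function.Injective T.mulVec := by
    intro a b hab
    have hz : T *ᵥ (a - b) = 0 := by rw [mulVec_sub, hab, sub_self]
    exact sub_eq_zero.mp (hker _ hz)
  have hTunit : IsUnit T := mulVec_injective_iff_isUnit.mp hinj
  have hTdet : IsUnit T.det := (isUnit_iff_isUnit_det T).mp hTunit
  have hTtdet : IsUnit Tᵀ.det := by rwa [det_transpose]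
  -- solve for C
  have hCeq : C = (T⁻¹)ᵀ * (lam • N) * T⁻¹ := by
    rw [transpose_nonsing_inv, ← hTCT, nonsing_inv_mul_cancel_left _ _ hTtdet,
      mul_nonsing_inv_cancel_right _ _ hTdet]
  -- positive semidefiniteness
  have hSpsd : S.PosSemidef := by
    have := posSemidef_self_mul_conjTranspose X
    rwa [conjTranspose_eq_transpose_of_trivial, ← hS] at this
  have hDpsd : D.PosSemidef := by
    have := posSemidef_conjTranspose_mul_self W1
    rwa [conjTranspose_eq_transpose_of_trivial, ← hD] at this
  have hSDS : (S * D * S).PosSemidef := by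
    have := hDpsd.conjTranspose_mul_mul_same S
    rwa [conjTranspose_eq_transpose_of_trivial, hSsym] at this
  have hNpsd : N.PosSemidef := (posSemidef_smul' hSpsd hlam.le).add hSDS
  have hfinal := (posSemidef_smul' hNpsd hlam.le).conjTranspose_mul_mul_same T⁻¹
  rwa [conjTranspose_eq_transpose_of_trivial, ← hCeq] at hfinal
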